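/- Let K be a compact metric space, f : K → ℝ a function, and α a countable ordinal. Then v_α(f) ≤ osc_α(f) ≤ v_α(f) + v_α(-f) pointwise on K. -/

import Mathlib

open Filter Topology

section DKdefs
variable {K : Type*} [MetricSpace K] [CompactSpace K]

/-- A bounded lower semicontinuous real function. -/
def BddLSC (u : K → ℝ) : Prop := LowerSemicontinuous u ∧ ∃ M : ℝ, ∀ x, |u x| ≤ M

/-- `f ∈ D(K)`: `f = (u₁ - u₂) + i(u₃ - u₄)` with the `uᵢ` bounded lower semicontinuous. -/
def MemDK (f : K → ℂ) : Prop :=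
  ∃ u₁ u₂ u₃ u₄ : K → ℝ, BddLSC u₁ ∧ BddLSC u₂ ∧ BddLSC u₃ ∧ BddLSC u₄ ∧
    ∀ x, f x = ((u₁ x - u₂ x : ℝ) : ℂ) + Complex.I * ((u₃ x - u₄ x : ℝ) : ℂ)

/-- `f ∈ D(K)` for real `f`: a difference of bounded lower semicontinuous functions. -/
def MemDKReal (f : K → ℝ) : Prop :=
  ∃ u₁ u₂ : K → ℝ, BddLSC u₁ ∧ BddLSC u₂ ∧ ∀ x, f x = u₁ x - u₂ x

/-- Upper semicontinuous envelope `Ug(x) = limsup_{y → x} g(y)` (non-exclusive limsup). -/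
noncomputable def uscEnv (g : K → EReal) : K → EReal := fun x => limsup g (𝓝 x)

/-- The transfinite oscillations `osc_β f` of a complex-valued function. -/
noncomputable def oscOrd (f : K → ℂ) (β : Ordinal) : K → EReal :=
  Ordinal.limitRecOn β (fun _ => (0 : EReal))
    (fun _ ih => uscEnv fun x =>
      limsup (fun y => ((‖f y - f x‖ : ℝ) : EReal) + ih y) (𝓝 x))
    (fun β _ ih => uscEnv fun x => ⨆ (α : Ordinal) (h : α < β), ih α h x)

/-- The transfinite oscillations `osc_β f` of a real-valued function. -/
noncomputable def oscOrdR (f : K → ℝ) (β : Ordinal) : K → EReal :=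
  Ordinal.limitRecOn β (fun _ => (0 : EReal))
    (fun _ ih => uscEnv fun x =>
      limsup (fun y => ((|f y - f x| : ℝ) : EReal) + ih y) (𝓝 x))
    (fun β _ ih => uscEnv fun x => ⨆ (α : Ordinal) (h : α < β), ih α h x)

/-- The positive transfinite oscillations `v_β f` of a real-valued function
(as `osc_β`, but with `f y - f x` in place of `|f y - f x|`). -/
noncomputable def vOrd (f : K → ℝ) (β : Ordinal) : K → EReal :=
  Ordinal.limitRecOn β (fun _ => (0 : EReal))
    (fun _ ih => uscEnv fun x =>
      limsup (fun y => ((f y - f x : ℝ) : EReal) + ih y) (𝓝 x))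
    (fun β _ ih => uscEnv fun x => ⨆ (α : Ordinal) (h : α < β), ih α h x)

/-- The `D(K)`-norm of a real function: the infimum of `sup_{x} Σ_j |φ_j x|` over all
pointwise representations `f = Σ_j φ_j` with `φ_j` continuous. -/
noncomputable def DNorm (f : K → ℝ) : ℝ :=
  sInf {M : ℝ | ∃ φ : ℕ → K → ℝ, (∀ j, Continuous (φ j)) ∧
    (∀ x, HasSum (fun j => φ j x) (f x)) ∧
    (∀ x, Summable fun j => |φ j x|) ∧ ∀ x, (∑' j, |φ j x|) ≤ M}

end DKdefs

section Aux
variable {K : Type*} [MetricSpace K] [CompactSpace K]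
set_option linter.unusedSectionVars false

lemma le_limsup_nhds (g : K → EReal) (x : K) : g x ≤ limsup g (𝓝 x) := by
  rw [limsup_eq_iInf_iSup]
  exact le_iInf₂ fun s hs => le_iSup₂_of_le x (mem_of_mem_nhds hs) le_rfl

lemma le_uscEnv (g : K → EReal) (x : K) : g x ≤ uscEnv g x := le_limsup_nhds g x

lemma uscEnv_mono {g h : K → EReal} (hgh : ∀ y, g y ≤ h y) (x : K) :
    uscEnv g x ≤ uscEnv h x :=
  limsup_le_limsup (Eventually.of_forall hgh)

lemma uscEnv_uscEnv_le (g : K → EReal) (x : K) : uscEnv (uscEnv g) x ≤ uscEnv g x := by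
  show limsup _ _ ≤ limsup _ _
  rw [limsup_eq_iInf_iSup (u := g)]
  refine le_iInf₂ fun s hs => ?_
  refine limsup_le_of_le (by isBoundedDefault) ?_
  filter_upwards [interior_mem_nhds.2 hs] with y hy
  show limsup g (𝓝 y) ≤ _
  rw [limsup_eq_iInf_iSup]
  exact iInf₂_le s (mem_interior_iff_mem_nhds.1 hy)

lemma vOrd_zero (f : K → ℝ) : vOrd f 0 = fun _ => (0 : EReal) := by
  rw [vOrd, Ordinal.limitRecOn_zero]

lemma vOrd_succ (f : K → ℝ) (α : Ordinal) :
    vOrd f (Order.succ α) = uscEnv fun x =>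
      limsup (fun y => ((f y - f x : ℝ) : EReal) + vOrd f α y) (𝓝 x) := by
  rw [vOrd, Ordinal.limitRecOn_succ]; rfl

lemma vOrd_limit (f : K → ℝ) {β : Ordinal} (hβ : Order.IsSuccLimit β) :
    vOrd f β = uscEnv fun x => ⨆ (α : Ordinal) (_ : α < β), vOrd f α x := by
  rw [vOrd, Ordinal.limitRecOn_limit _ _ _ _ hβ]; rfl

lemma oscOrdR_zero (f : K → ℝ) : oscOrdR f 0 = fun _ => (0 : EReal) := by
  rw [oscOrdR, Ordinal.limitRecOn_zero]

lemma oscOrdR_succ (f : K → ℝ) (α : Ordinal) :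
    oscOrdR f (Order.succ α) = uscEnv fun x =>
      limsup (fun y => ((|f y - f x| : ℝ) : EReal) + oscOrdR f α y) (𝓝 x) := by
  rw [oscOrdR, Ordinal.limitRecOn_succ]; rfl

lemma oscOrdR_limit (f : K → ℝ) {β : Ordinal} (hβ : Order.IsSuccLimit β) :
    oscOrdR f β = uscEnv fun x => ⨆ (α : Ordinal) (_ : α < β), oscOrdR f α x := by
  rw [oscOrdR, Ordinal.limitRecOn_limit _ _ _ _ hβ]; rfl

lemma vOrd_le_tilde (f : K → ℝ) (α : Ordinal) (y : K) :
    vOrd f α y ≤ limsup (fun w => ((f w - f y : ℝ) : EReal) + vOrd f α w) (𝓝 y) := by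
  refine le_trans ?_ (le_limsup_nhds _ y)
  simp

lemma vOrd_le_vOrd_succ (f : K → ℝ) (α : Ordinal) (y : K) :
    vOrd f α y ≤ vOrd f (Order.succ α) y := by
  rw [vOrd_succ]
  exact (vOrd_le_tilde f α y).trans
    (le_uscEnv (fun x => limsup (fun w => ((f w - f x : ℝ) : EReal) + vOrd f α w) (𝓝 x)) y)

lemma vOrd_nonneg (f : K → ℝ) (β : Ordinal) (x : K) : 0 ≤ vOrd f β x := by
  induction β using Ordinal.limitRecOn generalizing x with
  | zero => rw [vOrd_zero]
  | add_one α ih => rw [Ordinal.add_one_eq_succ]; exact (ih x).trans (vOrd_le_vOrd_succ f α x)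
  | limit β hβ ih =>
    rw [vOrd_limit f hβ]
    refine le_trans ?_ (le_uscEnv _ x)
    refine le_trans ?_ (le_iSup₂ (f := fun α (_ : α < β) => vOrd f α x) 0 hβ.pos)
    simp [vOrd_zero]

end Aux

/-- For real `f` and countable `α`: `v_α f ≤ osc_α f ≤ v_α f + v_α (-f)` pointwise. -/
theorem vOrd_le_oscOrd_le_add {K : Type*} [MetricSpace K] [CompactSpace K]
    (f : K → ℝ) (α : Ordinal) (hα : α < (Cardinal.aleph 1).ord) (x : K) :
    vOrd f α x ≤ oscOrdR f α x ∧
    oscOrdR f α x ≤ vOrd f α x + vOrd (fun y => -f y) α x := by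
  clear hα
  set g : K → ℝ := fun y => -f y with hg
  induction α using Ordinal.limitRecOn generalizing x with
  | zero =>
    rw [vOrd_zero, oscOrdR_zero]
    exact ⟨le_rfl, by simp [vOrd_zero]⟩
  | add_one α ih =>
    rw [Ordinal.add_one_eq_succ]
    constructor
    · rw [vOrd_succ, oscOrdR_succ]
      refine uscEnv_mono (fun z => ?_) x
      refine limsup_le_limsup (Eventually.of_forall fun y => ?_)
      exact add_le_add (EReal.coe_le_coe_iff.2 (le_abs_self _)) (ih y).1
    · rw [oscOrdR_succ]
      -- pointwise bound on the pre-envelope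
      have key : ∀ z, limsup (fun y => ((|f y - f z| : ℝ) : EReal) + oscOrdR f α y) (𝓝 z) ≤
          vOrd f (Order.succ α) z + vOrd g (Order.succ α) z := by
        intro z
        have hVf : ∀ y, vOrd f α y ≤ vOrd f (Order.succ α) y := fun y => vOrd_le_vOrd_succ f α y
        have hVg : ∀ y, vOrd g α y ≤ vOrd g (Order.succ α) y := fun y => vOrd_le_vOrd_succ g α y
        have hptw : ∀ y, ((|f y - f z| : ℝ) : EReal) + oscOrdR f α y ≤
            max ((((f y - f z : ℝ)) : EReal) + vOrd f α y + vOrd g (Order.succ α) y)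
                ((((g y - g z : ℝ)) : EReal) + vOrd g α y + vOrd f (Order.succ α) y) := by
          intro y
          have hosc := (ih y).2
          rcases le_total (f z) (f y) with h | h
          · refine le_max_of_le_left ?_
            rw [abs_of_nonneg (sub_nonneg.2 h), add_assoc]
            refine add_le_add le_rfl (hosc.trans (add_le_add le_rfl (hVg y)))
          · refine le_max_of_le_right ?_
            have : |f y - f z| = g y - g z := by
              rw [abs_of_nonpos (sub_nonpos.2 h)]; simp [hg]; ring
            rw [this, add_assoc]
            refine add_le_add le_rfl (hosc.trans ?_)
            rw [add_comm]
            exact add_le_add le_rfl (hVf y)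
        calc limsup (fun y => ((|f y - f z| : ℝ) : EReal) + oscOrdR f α y) (𝓝 z)
            ≤ limsup (fun y =>
                max ((((f y - f z : ℝ)) : EReal) + vOrd f α y + vOrd g (Order.succ α) y)
                    ((((g y - g z : ℝ)) : EReal) + vOrd g α y + vOrd f (Order.succ α) y))
                (𝓝 z) := limsup_le_limsup (Eventually.of_forall hptw)
          _ = max (limsup (fun y => (((f y - f z : ℝ)) : EReal) + vOrd f α y +
                    vOrd g (Order.succ α) y) (𝓝 z))
                  (limsup (fun y => (((g y - g z : ℝ)) : EReal) + vOrd g α y +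
                    vOrd f (Order.succ α) y) (𝓝 z)) := limsup_max
          _ ≤ vOrd f (Order.succ α) z + vOrd g (Order.succ α) z := by
              have hnb1 : limsup (fun y => (((f y - f z : ℝ)) : EReal) + vOrd f α y) (𝓝 z) ≠ ⊥ := by
                refine ne_of_gt (lt_of_lt_of_le ?_ ((vOrd_nonneg f α z).trans (vOrd_le_tilde f α z)))
                exact EReal.bot_lt_zero
              have hnb1' : limsup (fun y => (((g y - g z : ℝ)) : EReal) + vOrd g α y) (𝓝 z) ≠ ⊥ := by
                refine ne_of_gt (lt_of_lt_of_le ?_ ((vOrd_nonneg g α z).trans (vOrd_le_tilde g α z)))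
                exact EReal.bot_lt_zero
              have hnb2 : limsup (vOrd g (Order.succ α)) (𝓝 z) ≠ ⊥ := by
                refine ne_of_gt (lt_of_lt_of_le ?_
                  ((vOrd_nonneg g (Order.succ α) z).trans (le_limsup_nhds _ z)))
                exact EReal.bot_lt_zero
              have hnb2' : limsup (vOrd f (Order.succ α)) (𝓝 z) ≠ ⊥ := by
                refine ne_of_gt (lt_of_lt_of_le ?_
                  ((vOrd_nonneg f (Order.succ α) z).trans (le_limsup_nhds _ z)))
                exact EReal.bot_lt_zero
              have h1 : limsup (fun y => (((f y - f z : ℝ)) : EReal) + vOrd f α y +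
                    vOrd g (Order.succ α) y) (𝓝 z) ≤
                  vOrd f (Order.succ α) z + vOrd g (Order.succ α) z := by
                refine le_trans (EReal.limsup_add_le (Or.inl hnb1) (Or.inr hnb2)) ?_
                refine add_le_add ?_ ?_
                · rw [vOrd_succ]
                  exact le_uscEnv
                    (fun w => limsup (fun y => ((f y - f w : ℝ) : EReal) + vOrd f α y) (𝓝 w)) z
                · rw [vOrd_succ g α]
                  refine le_trans ?_ (uscEnv_uscEnv_le _ z)
                  rw [← vOrd_succ g α]
                  exact le_rfl
              have h2 : limsup (fun y => (((g y - g z : ℝ)) : EReal) + vOrd g α y +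
                    vOrd f (Order.succ α) y) (𝓝 z) ≤
                  vOrd f (Order.succ α) z + vOrd g (Order.succ α) z := by
                refine le_trans (EReal.limsup_add_le (Or.inl hnb1') (Or.inr hnb2')) ?_
                rw [add_comm (vOrd f (Order.succ α) z)]
                refine add_le_add ?_ ?_
                · rw [vOrd_succ]
                  exact le_uscEnv
                    (fun w => limsup (fun y => ((g y - g w : ℝ) : EReal) + vOrd g α y) (𝓝 w)) z
                · rw [vOrd_succ f α]
                  refine le_trans ?_ (uscEnv_uscEnv_le _ z)
                  rw [← vOrd_succ f α]
                  exact le_rfl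
              exact max_le h1 h2
      have hnbV : limsup (vOrd f (Order.succ α)) (𝓝 x) ≠ ⊥ :=
        ne_of_gt (lt_of_lt_of_le EReal.bot_lt_zero
          ((vOrd_nonneg f (Order.succ α) x).trans (le_limsup_nhds _ x)))
      have hnbV' : limsup (vOrd g (Order.succ α)) (𝓝 x) ≠ ⊥ :=
        ne_of_gt (lt_of_lt_of_le EReal.bot_lt_zero
          ((vOrd_nonneg g (Order.succ α) x).trans (le_limsup_nhds _ x)))
      calc uscEnv (fun z => limsup (fun y => ((|f y - f z| : ℝ) : EReal) + oscOrdR f α y) (𝓝 z)) x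
          ≤ uscEnv (fun z => vOrd f (Order.succ α) z + vOrd g (Order.succ α) z) x :=
            uscEnv_mono key x
        _ ≤ limsup (vOrd f (Order.succ α)) (𝓝 x) + limsup (vOrd g (Order.succ α)) (𝓝 x) :=
            EReal.limsup_add_le (Or.inl hnbV) (Or.inr hnbV')
        _ ≤ vOrd f (Order.succ α) x + vOrd g (Order.succ α) x := by
            refine add_le_add ?_ ?_
            · rw [vOrd_succ f α]
              refine le_trans ?_ (uscEnv_uscEnv_le _ x); rw [← vOrd_succ f α]; exact le_rfl
            · rw [vOrd_succ g α]
              refine le_trans ?_ (uscEnv_uscEnv_le _ x); rw [← vOrd_succ g α]; exact le_rfl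
  | limit β hβ ih =>
    constructor
    · rw [vOrd_limit f hβ, oscOrdR_limit f hβ]
      refine uscEnv_mono (fun z => ?_) x
      exact iSup₂_mono fun α h => (ih α h z).1
    · rw [oscOrdR_limit f hβ, vOrd_limit f hβ, vOrd_limit g hβ]
      have key : ∀ z, (⨆ (α : Ordinal) (_ : α < β), oscOrdR f α z) ≤
          (⨆ (α : Ordinal) (_ : α < β), vOrd f α z) + ⨆ (α : Ordinal) (_ : α < β), vOrd g α z := by
        intro z
        refine iSup₂_le fun α h => ?_
        exact (ih α h z).2.trans (add_le_add (le_iSup₂_of_le α h le_rfl) (le_iSup₂_of_le α h le_rfl))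
      have hS : ∀ (F : K → ℝ) (z : K), (0 : EReal) ≤ ⨆ (α : Ordinal) (_ : α < β), vOrd F α z := by
        intro F z
        exact le_iSup₂_of_le 0 hβ.pos (by rw [vOrd_zero])
      have hnb : limsup (fun z => ⨆ (α : Ordinal) (_ : α < β), vOrd f α z) (𝓝 x) ≠ ⊥ :=
        ne_of_gt (lt_of_lt_of_le EReal.bot_lt_zero ((hS f x).trans (le_limsup_nhds (fun z => ⨆ (α : Ordinal) (_ : α < β), vOrd f α z) x)))
      have hnb' : limsup (fun z => ⨆ (α : Ordinal) (_ : α < β), vOrd g α z) (𝓝 x) ≠ ⊥ :=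
        ne_of_gt (lt_of_lt_of_le EReal.bot_lt_zero ((hS g x).trans (le_limsup_nhds (fun z => ⨆ (α : Ordinal) (_ : α < β), vOrd g α z) x)))
      calc uscEnv (fun z => ⨆ (α : Ordinal) (_ : α < β), oscOrdR f α z) x
          ≤ uscEnv (fun z => (⨆ (α : Ordinal) (_ : α < β), vOrd f α z) +
              ⨆ (α : Ordinal) (_ : α < β), vOrd g α z) x := uscEnv_mono key x
        _ ≤ uscEnv (fun z => ⨆ (α : Ordinal) (_ : α < β), vOrd f α z) x +
            uscEnv (fun z => ⨆ (α : Ordinal) (_ : α < β), vOrd g α z) x :=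
            EReal.limsup_add_le (Or.inl hnb) (Or.inr hnb')
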